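/- Let H be a Hilbert space, 𝔄 a von Neumann algebra on H, and Ψ a cyclic and separating vector such that the state a ↦ ⟨Ψ, a Ψ⟩ is tracial on 𝔄 (i.e., ⟨Ψ, ab Ψ⟩ = ⟨Ψ, ba Ψ⟩ for all a, b ∈ 𝔄). Then the Tomita operator S_Ψ is antiunitary (‖S_Ψ ξ‖ = ‖ξ‖ for all ξ), and consequently the modular operator Δ_Ψ equals the identity. -/

import Mathlib

/-- If the vector state of a cyclic and separating vector `Ψ` is tracial on the
von Neumann algebra `𝔄`, then the Tomita operator `S_Ψ` (modelled as the
everywhere-defined continuous antilinear extension of `a Ψ ↦ a† Ψ`) is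
antiunitary, and the modular operator `Δ_Ψ` equals the identity. -/
theorem tracial_state_modular_operator_eq_one {H : Type*} [NormedAddCommGroup H]
    [InnerProductSpace ℂ H] [CompleteSpace H]
    (A : VonNeumannAlgebra H) (Ψ : H)
    (hcyc : Dense {x : H | ∃ a ∈ A, a Ψ = x})
    (hsep : ∀ a ∈ A, a Ψ = 0 → a = 0)
    (htrace : ∀ a ∈ A, ∀ b ∈ A,
      (inner ℂ Ψ ((a * b) Ψ) : ℂ) = inner ℂ Ψ ((b * a) Ψ))
    (S : H → H) (hScont : Continuous S)
    (hSadd : ∀ ξ η : H, S (ξ + η) = S ξ + S η)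
    (hSsmul : ∀ (c : ℂ) (ξ : H), S (c • ξ) = (starRingEnd ℂ c) • S ξ)
    (hS : ∀ a ∈ A, S (a Ψ) = (star a) Ψ)
    (Δ : H →L[ℂ] H)
    (hΔ : ∀ ξ η : H, (inner ℂ (Δ η) ξ : ℂ) = inner ℂ (S ξ) (S η)) :
    (∀ ξ : H, ‖S ξ‖ = ‖ξ‖) ∧ Δ = 1 := by
  have hiso : ∀ ξ : H, ‖S ξ‖ = ‖ξ‖ := by
    have key : Set.EqOn (fun ξ : H => ‖S ξ‖) (fun ξ : H => ‖ξ‖)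
        {x : H | ∃ a ∈ A, a Ψ = x} := by
      rintro x ⟨a, ha, rfl⟩
      have hstar : star a ∈ A := star_mem ha
      have hadj : (star a : H →L[ℂ] H) = ContinuousLinearMap.adjoint a :=
        ContinuousLinearMap.star_eq_adjoint a
      have h1 : (inner ℂ ((star a) Ψ) ((star a) Ψ) : ℂ) = inner ℂ (a Ψ) (a Ψ) := by
        calc (inner ℂ ((star a) Ψ) ((star a) Ψ) : ℂ)
            = inner ℂ Ψ (a ((star a) Ψ)) := by
              rw [hadj]; exact ContinuousLinearMap.adjoint_inner_left a _ _
          _ = inner ℂ Ψ ((a * star a) Ψ) := rfl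
          _ = inner ℂ Ψ ((star a * a) Ψ) := htrace a ha (star a) hstar
          _ = inner ℂ Ψ ((star a) (a Ψ)) := rfl
          _ = inner ℂ (a Ψ) (a Ψ) := by
              rw [hadj]; exact ContinuousLinearMap.adjoint_inner_right a _ _
      have h2 : ‖(star a) Ψ‖ = ‖a Ψ‖ := by
        rw [@norm_eq_sqrt_re_inner ℂ, @norm_eq_sqrt_re_inner ℂ, h1]
      simp only [hS a ha, h2]
    have := (hScont.norm).ext_on hcyc continuous_norm key
    exact fun ξ => congrFun this ξ
  have hSsub : ∀ ξ η : H, S (ξ - η) = S ξ - S η := by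
    intro ξ η
    have : S (ξ + (-1:ℂ) • η) = S ξ + (starRingEnd ℂ (-1:ℂ)) • S η := by
      rw [hSadd, hSsmul]
    simpa [sub_eq_add_neg] using this
  have hinner : ∀ ξ η : H, (inner ℂ (S ξ) (S η) : ℂ) = inner ℂ η ξ := by
    intro ξ η
    rw [inner_eq_sum_norm_sq_div_four, inner_eq_sum_norm_sq_div_four]
    have e1 : ‖S ξ + S η‖ = ‖η + ξ‖ := by
      rw [← hSadd, hiso, add_comm]
    have e2 : ‖S ξ - S η‖ = ‖η - ξ‖ := by
      rw [← hSsub, hiso, norm_sub_rev]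
    have e3 : ‖S ξ - (RCLike.I : ℂ) • S η‖ = ‖η - (RCLike.I : ℂ) • ξ‖ := by
      have : S ξ - (RCLike.I : ℂ) • S η = S (ξ + (RCLike.I : ℂ) • η) := by
        rw [hSadd, hSsmul]
        simp [RCLike.I, sub_eq_add_neg, Complex.conj_I, neg_smul]
      rw [this, hiso]
      have : ξ + (RCLike.I : ℂ) • η = (RCLike.I : ℂ) • (η - (RCLike.I : ℂ) • ξ) := by
        simp [smul_sub, smul_smul, RCLike.I]
        module
      rw [this, norm_smul]
      simp [RCLike.I]
    have e4 : ‖S ξ + (RCLike.I : ℂ) • S η‖ = ‖η + (RCLike.I : ℂ) • ξ‖ := by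
      have : S ξ + (RCLike.I : ℂ) • S η = S (ξ - (RCLike.I : ℂ) • η) := by
        rw [hSsub, hSsmul]
        simp [RCLike.I, sub_eq_add_neg, Complex.conj_I, neg_smul]
      rw [this, hiso]
      have : ξ - (RCLike.I : ℂ) • η = (-(RCLike.I : ℂ)) • (η + (RCLike.I : ℂ) • ξ) := by
        simp [smul_add, smul_smul, RCLike.I]
        module
      rw [this, norm_smul]
      simp [RCLike.I]
    rw [e1, e2, e3, e4]
  refine ⟨hiso, ?_⟩
  ext η
  apply ext_inner_right ℂ
  intro ξ
  rw [hΔ, hinner]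
  simp
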